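/- Let ω(p) = 1/2 + (1/2)·√(p² + (1-p)²), let ℓ : ℝ → ℝ be any affine function, and let ε > 0. If p is chosen uniformly at random from [1/2, 1], then the probability that |ℓ(p) - ω(p)| ≤ ε is at most C·√ε for some absolute constant C (e.g., C = 16 suffices). Equivalently, the Lebesgue measure of {p ∈ [1/2, 1] : |ℓ(p) - ω(p)| ≤ ε} is at most C·√ε·(1/2). -/

import Mathlib

open Real MeasureTheory Set

lemma quad_step (A B c : ℝ) (hle : A ≤ B) (hsum : A + B ≤ 2)
    (h : c ≤ B^2 - A^2) : A + c/2 ≤ B := by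
  nlinarith [mul_nonneg (sub_nonneg.2 hle) (by linarith : (0:ℝ) ≤ 2 - (A + B))]

lemma arg_le_one {x : ℝ} (hx1 : 1/2 ≤ x) (hx2 : x ≤ 1) : x^2+(1-x)^2 ≤ 1 := by
  nlinarith

lemma sqrt_key (x y l : ℝ) (hx1 : 1/2 ≤ x) (hx2 : x ≤ 1)
    (hy1 : 1/2 ≤ y) (hy2 : y ≤ 1) (hl0 : 0 ≤ l) (hl1 : l ≤ 1) :
    Real.sqrt ((l*x+(1-l)*y)^2 + (1-(l*x+(1-l)*y))^2) + l*(1-l)*(x-y)^2/2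
      ≤ l * Real.sqrt (x^2+(1-x)^2) + (1-l) * Real.sqrt (y^2+(1-y)^2) := by
  have hl1' : (0:ℝ) ≤ 1 - l := by linarith
  set z := l*x+(1-l)*y with hz
  have hz1 : 1/2 ≤ z := by
    have e1 := mul_le_mul_of_nonneg_left hx1 hl0
    have e2 := mul_le_mul_of_nonneg_left hy1 hl1'
    rw [hz]; linarith
  have hz2 : z ≤ 1 := by
    have e1 := mul_le_mul_of_nonneg_left hx2 hl0
    have e2 := mul_le_mul_of_nonneg_left hy2 hl1'
    rw [hz]; linarith
  have hxnn : (0:ℝ) ≤ x^2+(1-x)^2 := by positivity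
  have hynn : (0:ℝ) ≤ y^2+(1-y)^2 := by positivity
  have hznn : (0:ℝ) ≤ z^2+(1-z)^2 := by positivity
  set u := Real.sqrt (x^2+(1-x)^2) with hu
  set w := Real.sqrt (y^2+(1-y)^2) with hw
  set A := Real.sqrt (z^2+(1-z)^2) with hA
  have hu2 : u^2 = x^2+(1-x)^2 := Real.sq_sqrt hxnn
  have hw2 : w^2 = y^2+(1-y)^2 := Real.sq_sqrt hynn
  have hA2 : A^2 = z^2+(1-z)^2 := Real.sq_sqrt hznn
  have hu0 : 0 ≤ u := Real.sqrt_nonneg _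
  have hw0 : 0 ≤ w := Real.sqrt_nonneg _
  have hA0 : 0 ≤ A := Real.sqrt_nonneg _
  have hu1 : u ≤ 1 := Real.sqrt_le_one.mpr (arg_le_one hx1 hx2)
  have hw1 : w ≤ 1 := Real.sqrt_le_one.mpr (arg_le_one hy1 hy2)
  have hA1 : A ≤ 1 := Real.sqrt_le_one.mpr (arg_le_one hz1 hz2)
  clear_value u w A
  set t := x*y + (1-x)*(1-y) with ht
  have ht0 : 0 ≤ t := by
    have h1 : 0 ≤ x*y := mul_nonneg (by linarith) (by linarith)
    have h2 : 0 ≤ (1-x)*(1-y) := mul_nonneg (by linarith) (by linarith)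
    rw [ht]; linarith
  have ht1 : t ≤ 1 := by
    have h1 : 0 ≤ x*(1-y) := mul_nonneg (by linarith) (by linarith)
    have h2 : 0 ≤ y*(1-x) := mul_nonneg (by linarith) (by linarith)
    rw [ht]; linarith
  clear_value t
  have huw : (u*w)^2 = t^2 + (x-y)^2 := by rw [mul_pow, hu2, hw2, ht]; ring
  have huw0 : 0 ≤ u*w := mul_nonneg hu0 hw0
  have huwt : t ≤ u*w := by
    have h := Real.sqrt_le_sqrt (show t^2 ≤ (u*w)^2 by
      rw [huw]; linarith [sq_nonneg (x-y)])
    rwa [Real.sqrt_sq ht0, Real.sqrt_sq huw0] at h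
  have huw1 : u*w ≤ 1 := by
    have := mul_le_mul hu1 hw1 hw0 zero_le_one
    linarith
  have hgap : (x-y)^2/2 ≤ u*w - t := by
    have hint : 0 ≤ (u*w - t) * (2 - (u*w + t)) :=
      mul_nonneg (by linarith) (by linarith)
    linarith [hint, huw]
  have hA2' : A^2 = l^2*u^2 + (1-l)^2*w^2 + 2*l*(1-l)*t := by
    rw [hA2, hu2, hw2, hz, ht]; ring
  have hll : 0 ≤ l*(1-l) := mul_nonneg hl0 hl1'
  have havg0 : 0 ≤ l*u+(1-l)*w :=
    add_nonneg (mul_nonneg hl0 hu0) (mul_nonneg hl1' hw0)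
  have hAle : A ≤ l*u+(1-l)*w := by
    have hsq : z^2+(1-z)^2 ≤ (l*u+(1-l)*w)^2 := by
      have hint := mul_nonneg hll (sub_nonneg.2 huwt)
      have hA2'' := hA2'
      rw [hA2] at hA2''
      linarith [hint, hA2'']
    calc A = Real.sqrt (z^2+(1-z)^2) := hA
      _ ≤ Real.sqrt ((l*u+(1-l)*w)^2) := Real.sqrt_le_sqrt hsq
      _ = l*u+(1-l)*w := Real.sqrt_sq havg0
  have hsum : A + (l*u+(1-l)*w) ≤ 2 := by
    have e1 := mul_le_mul_of_nonneg_left hu1 hl0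
    have e2 := mul_le_mul_of_nonneg_left hw1 hl1'
    linarith
  have havgA : (l*u+(1-l)*w)^2 - A^2 = 2*l*(1-l)*(u*w - t) := by
    rw [hA2']; ring
  have m1 := mul_le_mul_of_nonneg_left hgap hll
  have hc : l*(1-l)*(x-y)^2 ≤ (l*u+(1-l)*w)^2 - A^2 := by
    rw [havgA]; linarith [m1]
  have := quad_step A (l*u+(1-l)*w) (l*(1-l)*(x-y)^2) hAle hsum hc
  linarith [this]

lemma triple (a b ε p q r : ℝ)
    (hp : p ∈ Set.Icc (1/2 : ℝ) 1) (hr : r ∈ Set.Icc (1/2 : ℝ) 1)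
    (hpq : p < q) (hqr : q < r)
    (h1 : |(a*p+b) - (1/2 + (1/2) * Real.sqrt (p^2+(1-p)^2))| ≤ ε)
    (h2 : |(a*q+b) - (1/2 + (1/2) * Real.sqrt (q^2+(1-q)^2))| ≤ ε)
    (h3 : |(a*r+b) - (1/2 + (1/2) * Real.sqrt (r^2+(1-r)^2))| ≤ ε) :
    (r-q)*(q-p) ≤ 8*ε := by
  have hrp : 0 < r - p := by linarith
  set l := (r-q)/(r-p) with hl
  have hl0 : 0 ≤ l := div_nonneg (by linarith) hrp.le
  have hl1 : l ≤ 1 := by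
    rw [hl, div_le_one hrp]; linarith
  have hq : l*p+(1-l)*r = q := by
    have hlm : l*(r-p) = r-q := by rw [hl]; exact div_mul_cancel₀ _ (ne_of_gt hrp)
    linear_combination -hlm
  have key := sqrt_key p r l hp.1 hp.2 hr.1 hr.2 hl0 hl1
  rw [hq] at key
  have hne : r - p ≠ 0 := ne_of_gt hrp
  have h1l : 1 - l = (q-p)/(r-p) := by
    rw [hl]; field_simp; ring
  have hprod : l*(1-l)*(p-r)^2 = (r-q)*(q-p) := by
    rw [hl, h1l, div_mul_div_comm, div_mul_eq_mul_div,
      div_eq_iff (mul_ne_zero hne hne)]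
    ring
  rw [hprod] at key
  rw [abs_le] at h1 h2 h3
  have hql : a*q + b = l*(a*p+b) + (1-l)*(a*r+b) := by rw [← hq]; ring
  have e1 := mul_le_mul_of_nonneg_left h1.1 hl0
  have e3 := mul_le_mul_of_nonneg_left h3.1 (by linarith : (0:ℝ) ≤ 1 - l)
  linarith [h2.2, e1, e3, key, hql]

theorem omega_affine_approx_measure_bound (a b ε : ℝ) (hε : 0 < ε) :
    MeasureTheory.volume
      {p ∈ Set.Icc (1/2 : ℝ) 1 |
        |(a * p + b) - (1/2 + (1/2) * Real.sqrt (p^2 + (1-p)^2))| ≤ ε}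
      ≤ ENNReal.ofReal (16 * Real.sqrt ε * (1/2)) := by
  set S := {p ∈ Set.Icc (1/2 : ℝ) 1 |
      |(a * p + b) - (1/2 + (1/2) * Real.sqrt (p^2 + (1-p)^2))| ≤ ε} with hS
  have hsub : S ⊆ Set.Icc (1/2 : ℝ) 1 := fun x hx => hx.1
  rcases Set.eq_empty_or_nonempty S with hemp | hne
  · rw [hemp]; simp
  have hbb : BddBelow S := ⟨1/2, fun x hx => (hsub hx).1⟩
  have hba : BddAbove S := ⟨1, fun x hx => (hsub hx).2⟩
  set K := Real.sqrt (8*ε) with hK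
  set η := Real.sqrt ε / 2 with hη
  have hK0 : 0 ≤ K := Real.sqrt_nonneg _
  have hη0 : 0 < η := by rw [hη]; positivity
  have hK2 : K^2 = 8*ε := Real.sq_sqrt (by positivity)
  set i := sInf S with hi
  set s := sSup S with hs
  have hcover : S ⊆ Set.Icc i (i + (K+2*η)) ∪ Set.Icc (s-(K+2*η)) s := by
    intro q hqS
    have hiq : i ≤ q := csInf_le hbb hqS
    have hqs : q ≤ s := le_csSup hba hqS
    by_contra hcon
    rw [Set.mem_union, Set.mem_Icc, Set.mem_Icc] at hcon
    push_neg at hcon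
    have hq1 : i + (K+2*η) < q := hcon.1 hiq
    have hq2 : q < s - (K+2*η) := by
      by_contra hq2'
      push_neg at hq2'
      exact absurd (hcon.2 hq2') (not_lt.2 hqs)
    obtain ⟨p, hpS, hpi⟩ := (csInf_lt_iff hbb hne).1 (by linarith : sInf S < i + η)
    obtain ⟨r, hrS, hri⟩ := (lt_csSup_iff hba hne).1 (by linarith : s - η < sSup S)
    have hpq : p < q := by linarith
    have hqr : q < r := by linarith
    have htr := triple a b ε p q r (hsub hpS) (hsub hrS) hpq hqr hpS.2 hqS.2 hrS.2
    have h1 : K + η < q - p := by linarith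
    have h2 : K + η < r - q := by linarith
    have hint := mul_lt_mul'' h2 h1 (by linarith) (by linarith)
    linarith [htr, hint, hK2, mul_nonneg hK0 hη0.le, mul_pos hη0 hη0]
  calc MeasureTheory.volume S ≤ MeasureTheory.volume
        (Set.Icc i (i + (K+2*η)) ∪ Set.Icc (s-(K+2*η)) s) := measure_mono hcover
    _ ≤ MeasureTheory.volume (Set.Icc i (i + (K+2*η)))
        + MeasureTheory.volume (Set.Icc (s-(K+2*η)) s) := measure_union_le _ _
    _ = ENNReal.ofReal (K+2*η) + ENNReal.ofReal (K+2*η) := by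
        rw [Real.volume_Icc, Real.volume_Icc]
        congr 1 <;> congr 1 <;> ring
    _ ≤ ENNReal.ofReal (16 * Real.sqrt ε * (1/2)) := by
        rw [← ENNReal.ofReal_add (by positivity) (by positivity)]
        apply ENNReal.ofReal_le_ofReal
        have h8 : Real.sqrt (8*ε) = Real.sqrt 8 * Real.sqrt ε := Real.sqrt_mul (by norm_num) ε
        have h83 : Real.sqrt 8 ≤ 3 := by
          nlinarith [Real.sq_sqrt (by norm_num : (0:ℝ) ≤ 8), Real.sqrt_nonneg 8]
        have hε0 : 0 ≤ Real.sqrt ε := Real.sqrt_nonneg ε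
        rw [hK, hη, h8]
        linarith [mul_le_mul_of_nonneg_right h83 hε0]
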